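/- Let G be a finite simple graph and A ⊆ V(G) with cut-rank r = ρ_G(A) ≥ 1. Then nss_G(A) ≤ r · 2^{(r² + 5r)/4} (as an inequality of real numbers). That is, the number of distinct GF(2)-spans of subsets of rows of the cut matrix of A is at most 2^{ρ_G(A)²/4 + 5ρ_G(A)/4} · ρ_G(A). -/

import Mathlib

open Classical in
/-- The cut matrix of `A`: rows indexed by `A`, columns by its complement, over GF(2),
with `(x,y)` entry `1` iff `x` and `y` are adjacent. -/
noncomputable def cutMatrix {V : Type*} [Fintype V] [DecidableEq V]
    (G : SimpleGraph V) (A : Finset V) : Matrix ↥A ↥(Aᶜ) (ZMod 2) :=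
  Matrix.of fun x y => if G.Adj x.1 y.1 then 1 else 0

/-- The cut-rank `ρ_G(A)`: the GF(2)-rank of the cut matrix of `A`. -/
noncomputable def cutRank {V : Type*} [Fintype V] [DecidableEq V]
    (G : SimpleGraph V) (A : Finset V) : ℕ :=
  (cutMatrix G A).rank

/-- The union-count `U_G(A)`: the number of distinct sets `N(Y) \ A` over `Y ⊆ A`. -/
noncomputable def unionCount {V : Type*} [Fintype V] [DecidableEq V]
    (G : SimpleGraph V) (A : Finset V) : ℕ :=
  Set.ncard {S : Set V | ∃ Y : Set V, Y ⊆ ↑A ∧ (⋃ y ∈ Y, G.neighborSet y) \ ↑A = S}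

/-- `nss_G(A)`: the number of distinct GF(2)-linear spans of subsets of rows of the
cut matrix of `A`. -/
noncomputable def nss {V : Type*} [Fintype V] [DecidableEq V]
    (G : SimpleGraph V) (A : Finset V) : ℕ :=
  Set.ncard {W : Submodule (ZMod 2) (↥(Aᶜ) → ZMod 2) |
    ∃ S : Set ↥A, W = Submodule.span (ZMod 2) ((fun x => cutMatrix G A x) '' S)}

section NssCount
open Module

private lemma two_pow_le_card_GL (k : ℕ) :
    2 ^ (k * (k - 1)) ≤ Nat.card (GL (Fin k) (ZMod 2)) := by
  rw [Matrix.card_GL_field]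
  have h2 : Fintype.card (ZMod 2) = 2 := by decide
  calc 2 ^ (k * (k - 1)) = ∏ _i : Fin k, 2 ^ (k - 1) := by
        rw [Finset.prod_const, Finset.card_univ, Fintype.card_fin, ← pow_mul, Nat.mul_comm]
    _ ≤ ∏ i : Fin k, (Fintype.card (ZMod 2) ^ k - Fintype.card (ZMod 2) ^ i.val) := by
        apply Finset.prod_le_prod'
        intro i _
        rw [h2]
        have hkpos : 0 < k := i.pos
        have h3 : 2 ^ (i : ℕ) ≤ 2 ^ (k - 1) := Nat.pow_le_pow_right (by norm_num) (by omega)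
        have h4 : 2 ^ k = 2 ^ (k - 1) * 2 := by
          rw [← pow_succ]
          congr 1
          omega
        omega

private lemma aux_card {M : Type*} [AddCommGroup M] [Module (ZMod 2) M] [Fintype M] (k : ℕ) :
    Nat.card {W : Submodule (ZMod 2) M // finrank (ZMod 2) ↥W = k}
      * Nat.card (GL (Fin k) (ZMod 2)) ≤ Fintype.card M ^ k := by
  classical
  haveI : Module.Finite (ZMod 2) M := Module.Finite.of_finite
  set T := {W : Submodule (ZMod 2) M // finrank (ZMod 2) ↥W = k} with hT
  let e : ∀ W : T, (Fin k → ZMod 2) ≃ₗ[ZMod 2] ↥W.1 :=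
    fun W => (Module.finBasisOfFinrankEq (ZMod 2) ↥W.1 W.2).equivFun.symm
  let E : ∀ _ : T × GL (Fin k) (ZMod 2), (Fin k → ZMod 2) ≃ₗ[ZMod 2] (Fin k → ZMod 2) :=
    fun p => LinearMap.GeneralLinearGroup.generalLinearEquiv (ZMod 2) (Fin k → ZMod 2)
        (Matrix.GeneralLinearGroup.toLin p.2)
  let Φ : T × GL (Fin k) (ZMod 2) → (Fin k → M) :=
    fun p i => ((e p.1) (E p (Pi.single i 1)) : M)
  have hΦ : ∀ p, Φ p = (p.1.1.subtype) ∘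
      ((Pi.basisFun (ZMod 2) (Fin k)).map ((E p).trans (e p.1))) := by
    intro p
    funext i
    simp [Φ, Basis.map_apply, Pi.basisFun_apply]
  have hspan : ∀ p, Submodule.span (ZMod 2) (Set.range (Φ p)) = p.1.1 := by
    intro p
    rw [hΦ p, Set.range_comp, Submodule.span_image, Basis.span_eq, Submodule.map_top,
      Submodule.range_subtype]
  have hinj : Function.Injective Φ := by
    rintro ⟨W, g⟩ ⟨W', g'⟩ h
    have hW : W = W' := by
      have := hspan (W, g)
      rw [h, hspan (W', g')] at this
      exact Subtype.ext this.symm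
    subst hW
    have h1 : ∀ i, E (W, g) (Pi.single i 1) = E (W, g') (Pi.single i 1) := by
      intro i
      apply (e W).injective
      apply Subtype.val_injective
      exact congrFun h i
    have h3 : (Matrix.GeneralLinearGroup.toLin (R := ZMod 2) (n := Fin k) g)
        = Matrix.GeneralLinearGroup.toLin g' := by
      apply Units.ext
      apply Basis.ext (Pi.basisFun (ZMod 2) (Fin k))
      intro i
      have := h1 i
      simpa [E, Pi.basisFun_apply] using this
    have hg : g = g' := Matrix.GeneralLinearGroup.toLin.injective h3
    simp [hg]
  have hle := Nat.card_le_card_of_injective Φ hinj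
  rw [Nat.card_prod] at hle
  calc Nat.card T * Nat.card (GL (Fin k) (ZMod 2)) ≤ Nat.card (Fin k → M) := hle
    _ = Fintype.card M ^ k := by
        rw [Nat.card_eq_fintype_card]
        simp

private lemma card_dim_le {M : Type*} [AddCommGroup M] [Module (ZMod 2) M] [Fintype M] {r : ℕ}
    (hr : finrank (ZMod 2) M = r) {k : ℕ} (hk : k ≤ r) :
    Nat.card {W : Submodule (ZMod 2) M // finrank (ZMod 2) ↥W = k}
      ≤ 2 ^ (k * (r - k) + k) := by
  have h1 := aux_card (M := M) k
  have h2 := two_pow_le_card_GL k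
  have hcard : Fintype.card M = 2 ^ r := by
    have h := card_eq_pow_finrank (K := ZMod 2) (V := M)
    rw [hr] at h
    simpa using h
  have h3 : Nat.card {W : Submodule (ZMod 2) M // finrank (ZMod 2) ↥W = k} * 2 ^ (k * (k - 1))
      ≤ 2 ^ (r * k) := by
    calc Nat.card {W : Submodule (ZMod 2) M // finrank (ZMod 2) ↥W = k} * 2 ^ (k * (k - 1))
        ≤ Nat.card {W : Submodule (ZMod 2) M // finrank (ZMod 2) ↥W = k}
            * Nat.card (GL (Fin k) (ZMod 2)) := Nat.mul_le_mul_left _ h2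
      _ ≤ Fintype.card M ^ k := h1
      _ = 2 ^ (r * k) := by rw [hcard, ← pow_mul]
  have hexp : (k * (r - k) + k) + k * (k - 1) = r * k := by
    obtain ⟨m, rfl⟩ : ∃ m, r = k + m := ⟨r - k, by omega⟩
    have e1 : k + m - k = m := by omega
    rw [e1]
    cases k with
    | zero => simp
    | succ n =>
      have e2 : n + 1 - 1 = n := by omega
      rw [e2]
      ring
  refine Nat.le_of_mul_le_mul_right ?_ (Nat.two_pow_pos (k * (k - 1)))
  calc Nat.card {W : Submodule (ZMod 2) M // finrank (ZMod 2) ↥W = k} * 2 ^ (k * (k - 1))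
      ≤ 2 ^ (r * k) := h3
    _ = 2 ^ (k * (r - k) + k) * 2 ^ (k * (k - 1)) := by rw [← pow_add, hexp]

private lemma card_submodule_le_real {M : Type*} [AddCommGroup M] [Module (ZMod 2) M] [Fintype M]
    {r : ℕ} (hr : finrank (ZMod 2) M = r) :
    (Nat.card (Submodule (ZMod 2) M) : ℝ)
      ≤ ((r : ℝ) + 1) * (2 : ℝ) ^ ((((r : ℝ) + 1) ^ 2) / 4) := by
  classical
  haveI : Module.Finite (ZMod 2) M := Module.Finite.of_finite
  haveI : Finite (Submodule (ZMod 2) M) :=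
    Finite.of_injective _ (SetLike.coe_injective (A := Submodule (ZMod 2) M))
  letI : Fintype (Submodule (ZMod 2) M) := Fintype.ofFinite _
  letI : ∀ k : Fin (r + 1),
      Fintype {W : Submodule (ZMod 2) M // finrank (ZMod 2) ↥W = (k : ℕ)} :=
    fun _ => Fintype.ofFinite _
  have hinj : Function.Injective (fun W : Submodule (ZMod 2) M =>
      (⟨⟨finrank (ZMod 2) ↥W, Nat.lt_succ_of_le (hr ▸ W.finrank_le)⟩, ⟨W, rfl⟩⟩ :
        Σ k : Fin (r + 1), {W : Submodule (ZMod 2) M // finrank (ZMod 2) ↥W = (k : ℕ)})) := by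
    intro W W' h
    exact congrArg (fun p => p.2.1) h
  have hle := Nat.card_le_card_of_injective _ hinj
  refine le_trans (by exact_mod_cast Nat.cast_le.mpr hle) ?_
  rw [Nat.card_eq_fintype_card, Fintype.card_sigma]
  have hbound : ∀ k : Fin (r + 1),
      (Fintype.card {W : Submodule (ZMod 2) M // finrank (ZMod 2) ↥W = (k : ℕ)} : ℝ)
        ≤ (2 : ℝ) ^ ((((r : ℝ) + 1) ^ 2) / 4) := by
    intro k
    have hk : (k : ℕ) ≤ r := Nat.lt_succ_iff.mp k.2
    have h1 : Fintype.card {W : Submodule (ZMod 2) M // finrank (ZMod 2) ↥W = (k : ℕ)}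
        ≤ 2 ^ ((k : ℕ) * (r - (k : ℕ)) + (k : ℕ)) := by
      rw [← Nat.card_eq_fintype_card]
      exact card_dim_le hr hk
    have h2 : ((2 : ℕ) ^ ((k : ℕ) * (r - (k : ℕ)) + (k : ℕ)) : ℝ)
        ≤ (2 : ℝ) ^ ((((r : ℝ) + 1) ^ 2) / 4) := by
      push_cast
      rw [← Real.rpow_natCast (2 : ℝ) ((k : ℕ) * (r - (k : ℕ)) + (k : ℕ))]
      apply Real.rpow_le_rpow_of_exponent_le one_le_two
      have hcast : (((k : ℕ) * (r - (k : ℕ)) + (k : ℕ) : ℕ) : ℝ)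
          = (k : ℝ) * ((r : ℝ) - (k : ℝ)) + (k : ℝ) := by
        push_cast [Nat.cast_sub hk]
        ring
      rw [hcast]
      have hkr : ((k : ℕ) : ℝ) ≤ (r : ℝ) := by exact_mod_cast hk
      nlinarith [sq_nonneg ((r : ℝ) + 1 - 2 * ((k : ℕ) : ℝ))]
    calc (Fintype.card {W : Submodule (ZMod 2) M // finrank (ZMod 2) ↥W = (k : ℕ)} : ℝ)
        ≤ ((2 : ℕ) ^ ((k : ℕ) * (r - (k : ℕ)) + (k : ℕ)) : ℝ) := by exact_mod_cast h1
      _ ≤ _ := h2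
  calc ((∑ k : Fin (r + 1),
        Fintype.card {W : Submodule (ZMod 2) M // finrank (ZMod 2) ↥W = (k : ℕ)} : ℕ) : ℝ)
      = ∑ k : Fin (r + 1),
        (Fintype.card {W : Submodule (ZMod 2) M // finrank (ZMod 2) ↥W = (k : ℕ)} : ℝ) := by
        push_cast; rfl
    _ ≤ ∑ _k : Fin (r + 1), (2 : ℝ) ^ ((((r : ℝ) + 1) ^ 2) / 4) :=
        Finset.sum_le_sum (fun k _ => hbound k)
    _ = ((r : ℝ) + 1) * (2 : ℝ) ^ ((((r : ℝ) + 1) ^ 2) / 4) := by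
        rw [Finset.sum_const, Finset.card_univ, Fintype.card_fin, nsmul_eq_mul]
        push_cast
        ring

private lemma card_submodule_le_two {M : Type*} [AddCommGroup M] [Module (ZMod 2) M] [Fintype M]
    (hr : finrank (ZMod 2) M = 1) : Nat.card (Submodule (ZMod 2) M) ≤ 2 := by
  classical
  haveI : Module.Finite (ZMod 2) M := Module.Finite.of_finite
  haveI : Finite (Submodule (ZMod 2) M) :=
    Finite.of_injective _ (SetLike.coe_injective (A := Submodule (ZMod 2) M))
  have key : ∀ W : Submodule (ZMod 2) M, W = ⊥ ∨ W = ⊤ := by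
    intro W
    have h1 : finrank (ZMod 2) ↥W ≤ 1 := hr ▸ W.finrank_le
    rcases Nat.le_one_iff_eq_zero_or_eq_one.mp h1 with h | h
    · left; exact Submodule.finrank_eq_zero.mp h
    · right; exact Submodule.eq_top_of_finrank_eq (by rw [h, hr])
  have : Nat.card (Submodule (ZMod 2) M) ≤ Nat.card Bool := by
    apply Nat.card_le_card_of_injective (fun W => decide (W = ⊥))
    intro W W' h
    simp only [decide_eq_decide] at h
    rcases key W with h1 | h1 <;> rcases key W' with h2 | h2 <;> simp_all
  simpa using this

end NssCount

/-- if `r = ρ_G(A) ≥ 1` then `nss_G(A) ≤ r · 2^((r² + 5r)/4)`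
as an inequality of real numbers. -/
theorem nss_le_of_cutRank {V : Type*} [Fintype V] [DecidableEq V]
    (G : SimpleGraph V) (A : Finset V) (r : ℕ) (hr : r = cutRank G A) (hr1 : 1 ≤ r) :
    (nss G A : ℝ) ≤ (r : ℝ) * (2 : ℝ) ^ ((((r : ℝ)) ^ 2 + 5 * (r : ℝ)) / 4) := by
  classical
  set R : Submodule (ZMod 2) (↥(Aᶜ) → ZMod 2) :=
    Submodule.span (ZMod 2) (Set.range (fun x => cutMatrix G A x)) with hRdef
  have hfr : Module.finrank (ZMod 2) ↥R = r := by
    rw [hr]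
    unfold cutRank
    rw [Matrix.rank_eq_finrank_span_row]
    rfl
  haveI : Finite ↥R := by
    have : Finite (↥(Aᶜ) → ZMod 2) := inferInstance
    exact Subtype.finite
  letI : Fintype ↥R := Fintype.ofFinite _
  haveI : Finite (Submodule (ZMod 2) ↥R) :=
    Finite.of_injective _ (SetLike.coe_injective (A := Submodule (ZMod 2) ↥R))
  -- the nss set injects into submodules of R
  set S : Set (Submodule (ZMod 2) (↥(Aᶜ) → ZMod 2)) :=
    {W | ∃ S : Set ↥A, W = Submodule.span (ZMod 2) ((fun x => cutMatrix G A x) '' S)} with hSdef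
  have hle : ∀ W ∈ S, W ≤ R := by
    rintro W ⟨s, rfl⟩
    exact Submodule.span_mono (Set.image_subset_range _ _)
  have hinj : Function.Injective
      (fun W : ↥S => Submodule.comap R.subtype W.1) := by
    intro W W' h
    have h' : Submodule.comap R.subtype W.1 = Submodule.comap R.subtype W'.1 := h
    have h1 := congrArg (Submodule.map R.subtype) h'
    rw [Submodule.map_comap_subtype, Submodule.map_comap_subtype,
      inf_eq_right.mpr (hle W.1 W.2), inf_eq_right.mpr (hle W'.1 W'.2)] at h1
    exact Subtype.ext h1
  have hnss : (nss G A : ℝ) ≤ (Nat.card (Submodule (ZMod 2) ↥R) : ℝ) := by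
    have h0 : nss G A = Nat.card ↥S := (Nat.card_coe_set_eq S).symm
    rw [h0]
    exact_mod_cast Nat.card_le_card_of_injective _ hinj
  rcases eq_or_lt_of_le hr1 with h1 | h2
  · -- r = 1
    have hfr1 : Module.finrank (ZMod 2) ↥R = 1 := by rw [hfr, ← h1]
    have h2 := card_submodule_le_two (M := ↥R) hfr1
    have : (nss G A : ℝ) ≤ 2 := le_trans hnss (by exact_mod_cast h2)
    refine le_trans this ?_
    rw [← h1]
    simp only [Nat.cast_one]
    calc (2 : ℝ) = (2 : ℝ) ^ (1 : ℝ) := (Real.rpow_one 2).symm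
      _ ≤ (2 : ℝ) ^ (((1 : ℝ) ^ 2 + 5 * 1) / 4 : ℝ) := by
          apply Real.rpow_le_rpow_of_exponent_le one_le_two
          norm_num
      _ = 1 * (2 : ℝ) ^ (((1 : ℝ) ^ 2 + 5 * 1) / 4 : ℝ) := (one_mul _).symm
  · -- 2 ≤ r
    have hr2 : (2 : ℕ) ≤ r := h2
    have hmain := card_submodule_le_real (M := ↥R) hfr
    refine le_trans hnss (le_trans hmain ?_)
    have hrR : (2 : ℝ) ≤ (r : ℝ) := by exact_mod_cast hr2
    have hpos : (0 : ℝ) < (2 : ℝ) ^ ((((r : ℝ) + 1) ^ 2) / 4) := Real.rpow_pos_of_pos two_pos _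
    calc ((r : ℝ) + 1) * (2 : ℝ) ^ ((((r : ℝ) + 1) ^ 2) / 4)
        ≤ (2 * (r : ℝ)) * (2 : ℝ) ^ ((((r : ℝ) + 1) ^ 2) / 4) := by
          apply mul_le_mul_of_nonneg_right _ (le_of_lt hpos)
          linarith
      _ = (r : ℝ) * ((2 : ℝ) ^ (1 : ℝ) * (2 : ℝ) ^ ((((r : ℝ) + 1) ^ 2) / 4)) := by
          rw [Real.rpow_one]; ring
      _ = (r : ℝ) * (2 : ℝ) ^ ((1 : ℝ) + (((r : ℝ) + 1) ^ 2) / 4) := by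
          rw [← Real.rpow_add two_pos]
      _ ≤ (r : ℝ) * (2 : ℝ) ^ ((((r : ℝ)) ^ 2 + 5 * (r : ℝ)) / 4) := by
          apply mul_le_mul_of_nonneg_left _ (by positivity)
          apply Real.rpow_le_rpow_of_exponent_le one_le_two
          nlinarith
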